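/- For a finite unitary magma M with m = #M, the ordinary generating function H(t) = Σ_{n≥1} (number of noncrossing M-cliques of arity n) t^n satisfies the algebraic equation t + (m³ - 2m² + 2m - 1)t² + (2m²t - 3mt + 2t - 1)H(t) + (m - 1)H(t)² = 0. -/

import Mathlib

/-- The set of arcs `(x, y)`, `x < y`, of a complete graph on `n + 1` vertices. -/
def Arc (n : ℕ) : Type := {a : Fin (n + 1) × Fin (n + 1) // a.1 < a.2}

/-- An `M`-clique is noncrossing if no two solid diagonals cross: there are no
arcs `a`, `b` labeled by non-unit elements with `a₁ < b₁ < a₂ < b₂`. -/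
def Noncrossing {M : Type} [One M] {n : ℕ} (p : Arc n → M) : Prop :=
  ∀ a b : Arc n, p a ≠ 1 → p b ≠ 1 →
    ¬(a.val.1 < b.val.1 ∧ b.val.1 < a.val.2 ∧ a.val.2 < b.val.2)

namespace NCAux

variable {M : Type} [One M]

/-- noncrossing condition at ℕ level -/
def NC (n : ℕ) (q : ℕ → ℕ → M) : Prop :=
  ∀ a b c d : ℕ, a < b → b < c → c < d → d ≤ n → q a c ≠ 1 → q b d ≠ 1 → False

def Supp (n : ℕ) (q : ℕ → ℕ → M) : Prop :=
  ∀ x y : ℕ, ¬(x < y ∧ y ≤ n) → q x y = 1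

def TT (M : Type) [One M] (n : ℕ) : Type := {q : ℕ → ℕ → M // NC n q ∧ Supp n q}

def ext {n : ℕ} (p : Arc n → M) : ℕ → ℕ → M := fun x y =>
  if h : x < y ∧ y ≤ n then
    p ⟨(⟨x, by omega⟩, ⟨y, by omega⟩), Fin.mk_lt_mk.mpr h.1⟩ else 1

lemma ext_ne_one {n : ℕ} {p : Arc n → M} {x y : ℕ} (h : ext p x y ≠ 1) :
    x < y ∧ y ≤ n := by
  by_contra hc
  exact h (dif_neg hc)

lemma ext_eq {n : ℕ} (p : Arc n → M) {x y : ℕ} (h : x < y ∧ y ≤ n) :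
    ext p x y = p ⟨(⟨x, by omega⟩, ⟨y, by omega⟩), Fin.mk_lt_mk.mpr h.1⟩ :=
  dif_pos h

def clqEquiv (n : ℕ) : {p : Arc n → M // Noncrossing p} ≃ TT M n where
  toFun p := ⟨ext p.1, by
    · intro a b c d hab hbc hcd hdn h1 h2
      have hac := ext_ne_one h1
      have hbd := ext_ne_one h2
      rw [ext_eq p.1 hac] at h1
      rw [ext_eq p.1 hbd] at h2
      exact p.2 _ _ h1 h2 ⟨Fin.mk_lt_mk.mpr hab, Fin.mk_lt_mk.mpr hbc, Fin.mk_lt_mk.mpr hcd⟩,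
    by
    · intro x y h
      exact dif_neg h⟩
  invFun q := ⟨fun a => q.1 a.val.1.val a.val.2.val, by
    intro a b h1 h2
    rintro ⟨u, v, w⟩
    exact q.2.1 a.val.1.val b.val.1.val a.val.2.val b.val.2.val u v w
      (Nat.lt_succ_iff.mp b.val.2.isLt) h1 h2⟩
  left_inv p := by
    apply Subtype.ext
    funext a
    obtain ⟨⟨⟨x, hx⟩, ⟨y, hy⟩⟩, hxy⟩ := a
    exact ext_eq p.1 ⟨hxy, by omega⟩
  right_inv q := by
    apply Subtype.ext
    funext x y
    show ext _ x y = q.1 x y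
    by_cases h : x < y ∧ y ≤ n
    · rw [ext_eq _ h]
    · rw [ext, dif_neg h]
      exact (q.2.2 x y h).symm

end NCAux

namespace NCAux

variable {M : Type} [One M]

instance {n : ℕ} : Finite (Arc n) := by
  unfold Arc; infer_instance

instance {n : ℕ} [Finite M] : Finite (TT M n) :=
  Finite.of_equiv _ (clqEquiv n)

def TTb (M : Type) [One M] (n : ℕ) : Type := {q : TT M n // q.1 0 n = 1}

instance {n : ℕ} [Finite M] : Finite (TTb M n) := Subtype.finite

noncomputable def cT (M : Type) [One M] (n : ℕ) : ℕ := Nat.card (TT M n)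
noncomputable def cTb (M : Type) [One M] (n : ℕ) : ℕ := Nat.card (TTb M n)

/-- NC only looks at values off the base. -/
lemma NC_congr {n : ℕ} {q q' : ℕ → ℕ → M}
    (h : ∀ x y, x < y → y ≤ n → ¬(x = 0 ∧ y = n) → q x y = q' x y)
    (hq : NC n q) : NC n q' := by
  intro a b c d hab hbc hcd hdn h1 h2
  have hac : q a c = q' a c := by
    by_cases hs : a < c ∧ c ≤ n
    · exact h a c hs.1 hs.2 (by omega)
    · omega
  have hbd : q b d = q' b d := h b d (by omega) hdn (by omega)
  exact hq a b c d hab hbc hcd hdn (hac ▸ h1) (hbd ▸ h2)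

/-- change the base label -/
def setBase {n : ℕ} (q : ℕ → ℕ → M) (c : M) : ℕ → ℕ → M :=
  fun x y => if x = 0 ∧ y = n then c else q x y

lemma setBase_NC {n : ℕ} {q : ℕ → ℕ → M} (hq : NC n q) (c : M) :
    NC n (setBase (n := n) q c) :=
  NC_congr (fun x y _ _ hb => by simp [setBase, hb]) hq

lemma setBase_Supp {n : ℕ} (hn : 1 ≤ n) {q : ℕ → ℕ → M} (hq : Supp n q) (c : M) :
    Supp n (setBase (n := n) q c) := by
  intro x y h
  have : ¬(x = 0 ∧ y = n) := by omega
  simp only [setBase, if_neg this]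
  exact hq x y h

def baseEquiv (n : ℕ) (hn : 1 ≤ n) : TT M n ≃ M × TTb M n where
  toFun q := (q.1 0 n, ⟨⟨setBase q.1 1, setBase_NC q.2.1 1, setBase_Supp hn q.2.2 1⟩,
    by simp [setBase]⟩)
  invFun cr := ⟨setBase cr.2.1.1 cr.1, setBase_NC cr.2.1.2.1 cr.1,
    setBase_Supp hn cr.2.1.2.2 cr.1⟩
  left_inv q := by
    apply Subtype.ext
    funext x y
    by_cases h : x = 0 ∧ y = n
    · simp [setBase, h]
    · simp [setBase, h]
  right_inv cr := by
    refine Prod.ext (by simp [setBase]) (Subtype.ext (Subtype.ext ?_))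
    funext x y
    by_cases h : x = 0 ∧ y = n
    · simpa [setBase, h] using cr.2.2.symm
    · simp [setBase, h]

lemma cT_eq_card_mul_cTb [Finite M] (n : ℕ) (hn : 1 ≤ n) :
    cT M n = Nat.card M * cTb M n := by
  rw [cT, Nat.card_congr (baseEquiv n hn), Nat.card_prod]
  rfl

lemma TT_zero_unique (q : TT M 0) : ∀ x y, q.1 x y = 1 := fun x y =>
  q.2.2 x y (by omega)

lemma cT_zero : cT M 0 = 1 := by
  rw [cT, Nat.card_eq_one_iff_unique]
  constructor
  · constructor
    intro a b
    apply Subtype.ext; funext x y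
    rw [TT_zero_unique a, TT_zero_unique b]
  · exact ⟨⟨fun _ _ => 1, fun _ _ _ _ _ _ _ _ h _ => h rfl, fun _ _ _ => rfl⟩⟩

lemma cTb_one : cTb M 1 = 1 := by
  rw [cTb, Nat.card_eq_one_iff_unique]
  constructor
  · constructor
    intro a b
    apply Subtype.ext; apply Subtype.ext; funext x y
    by_cases h : x = 0 ∧ y = 1
    · obtain ⟨rfl, rfl⟩ := h
      rw [a.2, b.2]
    · rw [a.1.2.2 x y (by omega), b.1.2.2 x y (by omega)]
  · exact ⟨⟨⟨fun _ _ => 1, fun _ _ _ _ _ _ _ _ h _ => h rfl, fun _ _ _ => rfl⟩, rfl⟩⟩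

end NCAux

namespace NCAux

open Classical

variable {M : Type} [One M]

/-! ### truncation (left part / inner part) -/

def trunc (q : ℕ → ℕ → M) (k : ℕ) : ℕ → ℕ → M := fun x y => if y ≤ k then q x y else 1

lemma trunc_NC {N k : ℕ} (hk : k ≤ N) {q : ℕ → ℕ → M} (h : NC N q) : NC k (trunc q k) := by
  intro a b c d hab hbc hcd hdn h1 h2
  simp only [trunc] at h1 h2
  rw [if_pos (by omega : c ≤ k)] at h1
  rw [if_pos (by omega : d ≤ k)] at h2
  exact h a b c d hab hbc hcd (by omega) h1 h2

lemma trunc_Supp {N k : ℕ} {q : ℕ → ℕ → M} (h : Supp N q) : Supp k (trunc q k) := by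
  intro x y hxy
  simp only [trunc]
  by_cases hy : y ≤ k
  · rw [if_pos hy]
    exact h x y (by omega)
  · rw [if_neg hy]

def truncT {N : ℕ} (k : ℕ) (hk : k ≤ N) (q : TT M N) : TT M k :=
  ⟨trunc q.1 k, trunc_NC hk q.2.1, trunc_Supp q.2.2⟩

/-! ### right part -/

def shiftR (j m' : ℕ) (q : ℕ → ℕ → M) : ℕ → ℕ → M := fun x y =>
  if x = 0 ∧ y = m' then 1 else q (x + j) (y + j)

lemma shiftR_NC {n j : ℕ} (hjn : j ≤ n) {q : ℕ → ℕ → M} (h : NC (n+1) q) :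
    NC (n+1-j) (shiftR j (n+1-j) q) := by
  intro a b c d hab hbc hcd hdn h1 h2
  simp only [shiftR] at h1 h2
  rw [if_neg (by omega)] at h1
  rw [if_neg (by omega)] at h2
  exact h (a+j) (b+j) (c+j) (d+j) (by omega) (by omega) (by omega) (by omega) h1 h2

lemma shiftR_Supp {n j : ℕ} (hjn : j ≤ n) {q : ℕ → ℕ → M} (h : Supp (n+1) q) :
    Supp (n+1-j) (shiftR j (n+1-j) q) := by
  intro x y hxy
  simp only [shiftR]
  by_cases hb : x = 0 ∧ y = n+1-j
  · rw [if_pos hb]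
  · rw [if_neg hb]
    exact h (x+j) (y+j) (by omega)

def shiftRT {n : ℕ} (j : ℕ) (hjn : j ≤ n) (q : TT M (n+1)) : TTb M (n+1-j) :=
  ⟨⟨shiftR j (n+1-j) q.1, shiftR_NC hjn q.2.1, shiftR_Supp hjn q.2.2⟩,
    by simp [shiftR]⟩

/-! ### the fiber predicates -/

def P0 (n : ℕ) (q : TT M (n+1)) : Prop := ∀ a, 1 ≤ a → a ≤ n → q.1 a (n+1) = 1

def Pj (n j : ℕ) (q : TT M (n+1)) : Prop :=
  q.1 j (n+1) ≠ 1 ∧ ∀ a, 1 ≤ a → a < j → q.1 a (n+1) = 1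

/-! ### fiber 0 equivalence -/

def glue0 (n : ℕ) (c : M) (r : ℕ → ℕ → M) : ℕ → ℕ → M := fun x y =>
  if x = 0 ∧ y = n+1 then c else r x y

lemma glue0_NC {n : ℕ} (c : M) {r : ℕ → ℕ → M} (hNC : NC n r) (hS : Supp n r) :
    NC (n+1) (glue0 n c r) := by
  intro a b c' d hab hbc hcd hdn h1 h2
  simp only [glue0] at h1 h2
  rw [if_neg (by omega)] at h1
  rw [if_neg (by omega)] at h2
  have hd : b < d ∧ d ≤ n := by
    by_contra hc
    exact h2 (hS b d hc)
  exact hNC a b c' d hab hbc hcd hd.2 h1 h2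

lemma glue0_Supp {n : ℕ} (c : M) {r : ℕ → ℕ → M} (hS : Supp n r) :
    Supp (n+1) (glue0 n c r) := by
  intro x y hxy
  simp only [glue0]
  rw [if_neg (by omega)]
  exact hS x y (by omega)

def fiber0Equiv (n : ℕ) : {q : TT M (n+1) // P0 n q} ≃ M × TT M n where
  toFun q := (q.1.1 0 (n+1), truncT n (by omega) q.1)
  invFun cr := ⟨⟨glue0 n cr.1 cr.2.1, glue0_NC cr.1 cr.2.2.1 cr.2.2.2,
      glue0_Supp cr.1 cr.2.2.2⟩, by
    intro a ha1 han
    simp only [glue0]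
    rw [if_neg (by omega)]
    exact cr.2.2.2 a (n+1) (by omega)⟩
  left_inv q := by
    apply Subtype.ext; apply Subtype.ext
    funext x y
    simp only [glue0, truncT, trunc]
    by_cases h : x = 0 ∧ y = n+1
    · obtain ⟨rfl, rfl⟩ := h
      rw [if_pos ⟨rfl, rfl⟩]
    · rw [if_neg h]
      by_cases hy : y ≤ n
      · rw [if_pos hy]
      · rw [if_neg hy]
        by_cases hy2 : y = n+1
        · subst hy2
          by_cases hx : 1 ≤ x ∧ x ≤ n
          · exact (q.2 x hx.1 hx.2).symm
          · exact (q.1.2.2 x (n+1) (by omega)).symm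
        · exact (q.1.2.2 x y (by omega)).symm
  right_inv cr := by
    refine Prod.ext ?_ (Subtype.ext ?_)
    · simp [glue0]
    · funext x y
      simp only [truncT, trunc, glue0]
      by_cases hy : y ≤ n
      · rw [if_pos hy, if_neg (by omega)]
      · rw [if_neg hy]
        exact (cr.2.2.2 x y (by omega)).symm

end NCAux

namespace NCAux

variable {M : Type} [One M]

def glueJ (n j : ℕ) (c s : M) (qL qR : ℕ → ℕ → M) : ℕ → ℕ → M := fun x y =>
  if x = 0 ∧ y = n+1 then c
  else if x = j ∧ y = n+1 then s
  else if y ≤ j then qL x y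
  else if j ≤ x then qR (x-j) (y-j)
  else 1

variable {n j : ℕ}

lemma glueJ_NC (hj1 : 1 ≤ j) (hjn : j ≤ n) (c s : M) {qL qR : ℕ → ℕ → M}
    (hL : NC j qL) (hLS : Supp j qL) (hR : NC (n+1-j) qR) (hRS : Supp (n+1-j) qR) :
    NC (n+1) (glueJ n j c s qL qR) := by
  intro a b c' d hab hbc hcd hdn h1 h2
  simp only [glueJ] at h1 h2
  rw [if_neg (by omega), if_neg (by omega)] at h1
  by_cases h1c : c' ≤ j
  · rw [if_pos h1c] at h1
    rw [if_neg (by omega)] at h2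
    by_cases h2j : b = j ∧ d = n+1
    · omega
    rw [if_neg h2j] at h2
    by_cases h2d : d ≤ j
    · rw [if_pos h2d] at h2
      exact hL a b c' d hab hbc hcd h2d h1 h2
    · rw [if_neg h2d, if_neg (by omega)] at h2
      exact h2 rfl
  · rw [if_neg h1c] at h1
    by_cases h1j : j ≤ a
    · rw [if_pos h1j] at h1
      rw [if_neg (by omega)] at h2
      by_cases h2j : b = j ∧ d = n+1
      · omega
      rw [if_neg h2j, if_neg (by omega), if_pos (by omega)] at h2
      exact hR (a-j) (b-j) (c'-j) (d-j) (by omega) (by omega) (by omega) (by omega) h1 h2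
    · rw [if_neg h1j] at h1
      exact h1 rfl

lemma glueJ_Supp (hj1 : 1 ≤ j) (hjn : j ≤ n) (c s : M) {qL qR : ℕ → ℕ → M}
    (hLS : Supp j qL) (hRS : Supp (n+1-j) qR) :
    Supp (n+1) (glueJ n j c s qL qR) := by
  intro x y hxy
  simp only [glueJ]
  rw [if_neg (by omega), if_neg (by omega)]
  by_cases hy : y ≤ j
  · rw [if_pos hy]
    exact hLS x y (by omega)
  · rw [if_neg hy]
    by_cases hx : j ≤ x
    · rw [if_pos hx]
      exact hRS _ _ (by omega)
    · rw [if_neg hx]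

def fiberJEquiv (hj1 : 1 ≤ j) (hjn : j ≤ n) :
    {q : TT M (n+1) // Pj n j q} ≃ M × {s : M // s ≠ 1} × TT M j × TTb M (n+1-j) where
  toFun q := (q.1.1 0 (n+1), ⟨q.1.1 j (n+1), q.2.1⟩, truncT j (by omega) q.1,
    shiftRT j hjn q.1)
  invFun x :=
    have obligations : NC (n+1) (glueJ n j x.1 x.2.1.1 x.2.2.1.1 x.2.2.2.1.1) ∧
        Supp (n+1) (glueJ n j x.1 x.2.1.1 x.2.2.1.1 x.2.2.2.1.1) :=
      ⟨glueJ_NC hj1 hjn _ _ x.2.2.1.2.1 x.2.2.1.2.2 x.2.2.2.1.2.1 x.2.2.2.1.2.2,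
       glueJ_Supp hj1 hjn _ _ x.2.2.1.2.2 x.2.2.2.1.2.2⟩
    ⟨⟨glueJ n j x.1 x.2.1.1 x.2.2.1.1 x.2.2.2.1.1, obligations.1, obligations.2⟩, by
      constructor
      · show glueJ n j x.1 x.2.1.1 x.2.2.1.1 x.2.2.2.1.1 j (n+1) ≠ 1
        simp only [glueJ]
        rw [if_neg (by omega), if_pos (by simp)]
        exact x.2.1.2
      · intro a ha1 haj
        show glueJ n j x.1 x.2.1.1 x.2.2.1.1 x.2.2.2.1.1 a (n+1) = 1
        simp only [glueJ]
        rw [if_neg (by omega), if_neg (by omega), if_neg (by omega), if_neg (by omega)]⟩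
  left_inv q := by
    apply Subtype.ext; apply Subtype.ext
    funext x y
    simp only [glueJ, truncT, trunc, shiftRT, shiftR]
    by_cases h0 : x = 0 ∧ y = n+1
    · obtain ⟨rfl, rfl⟩ := h0
      rw [if_pos ⟨rfl, rfl⟩]
    rw [if_neg h0]
    by_cases hj : x = j ∧ y = n+1
    · obtain ⟨rfl, rfl⟩ := hj
      rw [if_pos ⟨rfl, rfl⟩]
    rw [if_neg hj]
    by_cases hy : y ≤ j
    · rw [if_pos hy, if_pos hy]
    rw [if_neg hy]
    by_cases hx : j ≤ x
    · rw [if_pos hx, if_neg (by omega)]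
      have hx' : x - j + j = x := by omega
      have hy' : y - j + j = y := by omega
      rw [hx', hy']
    rw [if_neg hx]
    -- x < j < y, show 1 = q x y
    by_cases hy2 : y = n+1
    · subst hy2
      exact (q.2.2 x (by omega) (by omega)).symm
    by_cases hy3 : y ≤ n
    · by_contra hne
      exact q.1.2.1 x j y (n+1) (by omega) (by omega) (by omega) (le_refl _)
        (fun hq => hne hq.symm) q.2.1
    · exact (q.1.2.2 x y (by omega)).symm
  right_inv x := by
    obtain ⟨c, s, L, R⟩ := x
    refine Prod.ext ?_ (Prod.ext (Subtype.ext ?_) (Prod.ext (Subtype.ext ?_)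
      (Subtype.ext (Subtype.ext ?_))))
    · show glueJ n j c s.1 L.1 R.1.1 0 (n+1) = c
      simp only [glueJ]
      rw [if_pos (by simp)]
    · show glueJ n j c s.1 L.1 R.1.1 j (n+1) = s.1
      simp only [glueJ]
      rw [if_neg (by omega), if_pos (by simp)]
    · funext x y
      simp only [truncT, trunc, glueJ]
      by_cases hy : y ≤ j
      · rw [if_pos hy, if_neg (by omega), if_neg (by omega), if_pos hy]
      · rw [if_neg hy]
        exact (L.2.2 x y (by omega)).symm
    · funext x y
      simp only [shiftRT, shiftR, glueJ]
      by_cases hb : x = 0 ∧ y = n+1-j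
      · obtain ⟨rfl, rfl⟩ := hb
        rw [if_pos ⟨rfl, rfl⟩]
        exact R.2.symm
      rw [if_neg hb, if_neg (by omega), if_neg (by omega)]
      by_cases hy : y = 0
      · subst hy
        rw [if_pos (by omega), Nat.zero_add]
        rw [L.2.2 (x+j) j (by omega), R.1.2.2 x 0 (by omega)]
      · rw [if_neg (by omega), if_pos (by omega)]
        have hx' : x + j - j = x := by omega
        have hy' : y + j - j = y := by omega
        rw [hx', hy']

end NCAux

namespace NCAux

open Classical

variable {M : Type} [One M]

noncomputable def classify {n : ℕ} (q : TT M (n+1)) : ℕ :=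
  if h : ∃ a, 1 ≤ a ∧ a ≤ n ∧ q.1 a (n+1) ≠ 1 then Nat.find h else 0

lemma classify_le {n : ℕ} (q : TT M (n+1)) : classify q ≤ n := by
  rw [classify]
  split
  · next h => obtain ⟨a, ha⟩ := id h; exact le_trans (Nat.find_min' h ha) ha.2.1
  · omega

lemma classify_eq_zero_iff {n : ℕ} (q : TT M (n+1)) : classify q = 0 ↔ P0 n q := by
  rw [classify]
  split
  · next h =>
    constructor
    · intro h0
      have := Nat.find_spec h
      rw [h0] at this
      omega
    · intro hp
      obtain ⟨a, ha⟩ := h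
      exact absurd (hp a ha.1 ha.2.1) ha.2.2
  · next h =>
    push_neg at h
    exact ⟨fun _ a ha1 han => h a ha1 han, fun _ => rfl⟩

lemma classify_eq_iff {n j : ℕ} (hj1 : 1 ≤ j) (hjn : j ≤ n) (q : TT M (n+1)) :
    classify q = j ↔ Pj n j q := by
  rw [classify]
  split
  · next h =>
    rw [Nat.find_eq_iff]
    constructor
    · intro ⟨h1, h2⟩
      refine ⟨h1.2.2, fun a ha1 haj => ?_⟩
      by_contra hne
      exact h2 a haj ⟨ha1, by omega, hne⟩
    · intro ⟨h1, h2⟩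
      refine ⟨⟨hj1, hjn, h1⟩, fun a haj hpa => hpa.2.2 (h2 a hpa.1 haj)⟩
  · next h =>
    push_neg at h
    constructor
    · omega
    · intro hp
      exact absurd (h j hj1 hjn) (fun he => hp.1 he)

noncomputable def classifyF {n : ℕ} (q : TT M (n+1)) : Fin (n+1) :=
  ⟨classify q, by have := classify_le q; omega⟩

lemma card_ne_one [Fintype M] : Nat.card {s : M // s ≠ 1} = Fintype.card M - 1 := by
  rw [Nat.card_eq_fintype_card]
  have h1 : Fintype.card {s : M // s = 1} = 1 := Fintype.card_subtype_eq (1 : M)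
  have := Fintype.card_subtype_compl (p := fun s : M => s = 1)
  rw [h1] at this
  convert this using 2

lemma cT_succ_eq [Fintype M] (n : ℕ) :
    cT M (n+1) = Fintype.card M * cT M n +
      ∑ i ∈ Finset.range n,
        Fintype.card M * (Fintype.card M - 1) * (cT M (i+1) * cTb M (n-i)) := by
  letI : Fintype (TT M (n+1)) := Fintype.ofFinite _
  letI : ∀ j : Fin (n+1), Fintype {q : TT M (n+1) // classifyF q = j} :=
    fun _ => Fintype.ofFinite _
  have key : cT M (n+1) = ∑ j : Fin (n+1), Nat.card {q : TT M (n+1) // classifyF q = j} := by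
    have h1 : cT M (n+1) = Nat.card (Σ j : Fin (n+1), {q : TT M (n+1) // classifyF q = j}) :=
      Nat.card_congr (Equiv.sigmaFiberEquiv (classifyF (M := M) (n := n))).symm
    rw [h1, Nat.card_eq_fintype_card, Fintype.card_sigma]
    simp [Nat.card_eq_fintype_card]
  rw [key, Fin.sum_univ_succ]
  congr 1
  · -- j = 0 term
    have e1 : {q : TT M (n+1) // classifyF q = 0} ≃ M × TT M n :=
      (Equiv.subtypeEquivRight (fun q => by
        rw [show (classifyF q = 0) ↔ (classify q = 0) from ⟨fun h => congrArg Fin.val h,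
          fun h => Fin.ext h⟩, classify_eq_zero_iff])).trans (fiber0Equiv n)
    rw [Nat.card_congr e1, Nat.card_prod, Nat.card_eq_fintype_card, cT]
  · -- j ≥ 1 terms
    rw [← Fin.sum_univ_eq_sum_range (fun i =>
        Fintype.card M * (Fintype.card M - 1) * (cT M (i+1) * cTb M (n-i))) n]
    apply Finset.sum_congr rfl
    intro i _
    have hi1 : 1 ≤ (i : ℕ) + 1 := by omega
    have hin : (i : ℕ) + 1 ≤ n := by omega
    have e1 : {q : TT M (n+1) // classifyF q = i.succ} ≃
        M × {s : M // s ≠ 1} × TT M ((i : ℕ)+1) × TTb M (n+1-((i : ℕ)+1)) :=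
      (Equiv.subtypeEquivRight (fun q => by
        rw [show (classifyF q = i.succ) ↔ (classify q = (i : ℕ)+1) from
          ⟨fun h => congrArg Fin.val h, fun h => Fin.ext h⟩, classify_eq_iff hi1 hin])).trans
        (fiberJEquiv hi1 hin)
    rw [Nat.card_congr e1, Nat.card_prod, Nat.card_prod, Nat.card_prod,
      Nat.card_eq_fintype_card, card_ne_one]
    have : n + 1 - ((i : ℕ) + 1) = n - (i : ℕ) := by omega
    rw [this, cT, cTb]
    ring

end NCAux

namespace NCAux

variable {M : Type} [One M]

lemma sum_split (g : ℕ → ℚ) (K : ℕ) :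
    ∑ i ∈ Finset.range (K+4), g i
      = g 0 + g 1 + g (K+2) + g (K+3) + ∑ i ∈ Finset.range K, g (i+2) := by
  rw [Finset.sum_range_succ, Finset.sum_range_succ, Finset.sum_range_succ',
    Finset.sum_range_succ']
  have he : ∀ i : ℕ, g (i+1+1) = g (i+2) := fun i => rfl
  simp only [he]
  ring

end NCAux

/-- The ordinary generating function `H(t) = ∑_{n ≥ 1} (#noncrossing M-cliques
of arity n) tⁿ` (by convention, the unique noncrossing `M`-clique of arity `1`
is the one whose base is labeled by the unit, so the coefficient of `t` is `1`). -/
noncomputable def ncSeries (M : Type) [One M] : PowerSeries ℚ :=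
  PowerSeries.mk fun n =>
    if n = 0 then 0
    else if n = 1 then 1
    else (Nat.card {p : Arc n → M // Noncrossing p} : ℚ)

open NCAux Finset in
/-- For a finite unitary magma `M` with `m = #M`, the generating function `H(t)`
of noncrossing `M`-cliques satisfies
`t + (m³-2m²+2m-1)t² + (2m²t-3mt+2t-1)H(t) + (m-1)H(t)² = 0`. -/
theorem ncSeries_algebraic_equation (M : Type) [MulOneClass M] [Fintype M]
    (m : ℕ) (hm : Fintype.card M = m) :
    (PowerSeries.X : PowerSeries ℚ)
      + PowerSeries.C ((m : ℚ) ^ 3 - 2 * (m : ℚ) ^ 2 + 2 * (m : ℚ) - 1) *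
          PowerSeries.X ^ 2
      + (PowerSeries.C (2 * (m : ℚ) ^ 2 - 3 * (m : ℚ) + 2) * PowerSeries.X - 1) *
          ncSeries M
      + PowerSeries.C ((m : ℚ) - 1) * ncSeries M ^ 2 = 0 := by
  subst hm
  set m : ℕ := Fintype.card M with hmdef
  have hm1 : 1 ≤ m := Fintype.card_pos
  set A : ℚ := (m:ℚ)^3 - 2*(m:ℚ)^2 + 2*(m:ℚ) - 1 with hA
  set B : ℚ := 2*(m:ℚ)^2 - 3*(m:ℚ) + 2 with hB
  set D : ℚ := (m:ℚ) - 1 with hD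
  clear_value A B D
  set h : ℕ → ℚ := fun n =>
    if n = 0 then 0 else if n = 1 then 1 else (cT M n : ℚ) with hh
  have hcoeff : ∀ N, PowerSeries.coeff N (ncSeries M) = h N := by
    intro N
    rw [ncSeries, PowerSeries.coeff_mk, hh]
    rcases N with _ | _ | N
    · simp
    · simp
    · simp only [if_neg (by omega : ¬ N+2 = 0), if_neg (by omega : ¬ N+2 = 1)]
      rw [Nat.card_congr (clqEquiv (N+2))]
      rfl
  have hv : ∀ j : ℕ, h (j+2) = (cT M (j+2) : ℚ) := by
    intro j
    rw [hh]
    simp only [if_neg (by omega : ¬ j+2 = 0), if_neg (by omega : ¬ j+2 = 1)]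
  have h0 : h 0 = 0 := by simp [hh]
  have h1 : h 1 = 1 := by simp [hh]
  -- basic counting facts, cast to ℚ
  have hb1 : (cTb M 1 : ℚ) = 1 := by rw [cTb_one]; norm_num
  have hf2 : ∀ k, 1 ≤ k → (cT M k : ℚ) = m * cTb M k := by
    intro k hk
    rw [cT_eq_card_mul_cTb k hk, Nat.card_eq_fintype_card]
    push_cast
    ring
  have hf1 : ∀ n : ℕ, (cT M (n+1) : ℚ) =
      m * cT M n + ∑ i ∈ range n, m * ((m : ℚ) - 1) * (cT M (i+1) * cTb M (n-i)) := by
    intro n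
    rw [cT_succ_eq n, ← hmdef]
    push_cast [Nat.cast_sub hm1]
    ring_nf
  have hc1 : (cT M 1 : ℚ) = m := by
    rw [hf1 0, cT_zero]
    simp
  have hc2 : (cT M 2 : ℚ) = (m : ℚ)^3 := by
    rw [hf1 1, Finset.sum_range_one, Nat.zero_add, Nat.sub_zero, hc1, hb1]
    push_cast
    ring
  -- the key recurrence
  have key : ∀ k : ℕ, (cT M (k+3) : ℚ) =
      (2*(m:ℚ)^2 - (m:ℚ)) * cT M (k+2)
        + ((m:ℚ)-1) * ∑ i ∈ range k, (cT M (i+2) : ℚ) * (cT M (k+1-i) : ℚ) := by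
    intro k
    have step1 : ∀ i ∈ range k,
        (m:ℚ) * ((m:ℚ)-1) * ((cT M (i+1+1) : ℚ) * (cTb M (k+2-(i+1)) : ℚ))
          = ((m:ℚ)-1) * ((cT M (i+2) : ℚ) * (cT M (k+1-i) : ℚ)) := by
      intro i hi
      simp only [mem_range] at hi
      have e1 : k+2-(i+1) = k+1-i := by omega
      have e2 : i+1+1 = i+2 := rfl
      rw [e1, e2, hf2 (k+1-i) (by omega)]
      ring
    have hf0 : (m:ℚ) * ((m:ℚ)-1) * ((cT M (0+1) : ℚ) * (cTb M (k+2-0) : ℚ))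
        = ((m:ℚ)-1) * (m:ℚ) * (cT M (k+2) : ℚ) := by
      rw [Nat.sub_zero, Nat.zero_add, hc1, hf2 (k+2) (by omega)]
      ring
    have hfk : (m:ℚ) * ((m:ℚ)-1) * ((cT M (k+1+1) : ℚ) * (cTb M (k+2-(k+1)) : ℚ))
        = (m:ℚ) * ((m:ℚ)-1) * (cT M (k+2) : ℚ) := by
      have e1 : k+2-(k+1) = 1 := by omega
      rw [e1, hb1]
      ring
    rw [hf1 (k+2), Finset.sum_range_succ, Finset.sum_range_succ',
      Finset.sum_congr rfl step1, hf0, hfk, Finset.mul_sum]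
    ring
  -- coefficient extraction helpers
  have hHH : ∀ N, PowerSeries.coeff N (ncSeries M * ncSeries M)
      = ∑ i ∈ range (N+1), h i * h (N-i) := by
    intro N
    rw [PowerSeries.coeff_mul, Finset.Nat.sum_antidiagonal_eq_sum_range_succ_mk]
    simp only [hcoeff]
  have hXH : ∀ N, PowerSeries.coeff (N+1) (PowerSeries.X * ncSeries M) = h N := by
    intro N
    rw [PowerSeries.coeff_succ_X_mul, hcoeff]
  have expand : (PowerSeries.C B * PowerSeries.X - 1) * ncSeries M
      = PowerSeries.C B * (PowerSeries.X * ncSeries M) - ncSeries M := by ring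
  have expand2 : (ncSeries M) ^ 2 = ncSeries M * ncSeries M := by ring
  rw [expand, expand2]
  refine PowerSeries.ext fun N => ?_
  rw [map_zero, map_add, map_add, map_add, map_sub, PowerSeries.coeff_C_mul,
    PowerSeries.coeff_C_mul, PowerSeries.coeff_C_mul, PowerSeries.coeff_X,
    PowerSeries.coeff_X_pow, hHH, hcoeff]
  rcases N with _ | _ | _ | K
  · -- N = 0
    rw [PowerSeries.coeff_zero_X_mul]
    simp [h0, Finset.sum_range_one]
  · -- N = 1
    rw [hXH 0]
    simp [h0, h1, Finset.sum_range_succ, Finset.sum_range_one]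
  · -- N = 2
    rw [hXH 1]
    have hv2 : h 2 = (cT M 2 : ℚ) := hv 0
    have e : ∑ i ∈ range (2+1), h i * h (2-i) = 1 := by
      rw [Finset.sum_range_succ, Finset.sum_range_succ, Finset.sum_range_one]
      norm_num [h0, h1]
    rw [e, hv2, hc2, h1, hA, hB, hD]
    norm_num
    ring
  · -- N = K+3
    rw [hXH (K+2)]
    have hv3 : h (K+3) = (cT M (K+3) : ℚ) := hv (K+1)
    have hvK : h (K+2) = (cT M (K+2) : ℚ) := hv K
    have hmid : ∀ i ∈ range K,
        h (i+2) * h (K+3-(i+2)) = (cT M (i+2) : ℚ) * (cT M (K+1-i) : ℚ) := by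
      intro i hi
      rw [mem_range] at hi
      have e1 : K+3-(i+2) = (K-1-i)+2 := by omega
      have e2 : K+1-i = (K-1-i)+2 := by omega
      rw [e1, hv i, hv (K-1-i), ← e2]
    rw [show K+3+1 = K+4 from rfl, sum_split (fun i => h i * h (K+3-i)) K]
    rw [show K+3-0 = K+3 from by omega, show K+3-1 = K+2 from by omega,
      show K+3-(K+2) = 1 from by omega, show K+3-(K+3) = 0 from by omega]
    rw [Finset.sum_congr rfl hmid, hv3, hvK, h0, h1, key K, hA, hB, hD]
    rw [if_neg (by omega : ¬ K+3 = 1), if_neg (by omega : ¬ K+3 = 2)]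
    ring
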